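/- Let p be a prime, T a group with a maximal subgroup N of index p that is abelian of exponent dividing p. Then N is normal in T, and for any σ ∈ T \ N, the commutator subgroup [T,T] equals [⟨σ⟩, N], i.e. the subgroup generated by commutators [σ,n] for n ∈ N. -/

import Mathlib

open Subgroup
open scoped commutatorElement

/-- Let `p` be a prime, `T` a group with a maximal subgroup `N` of index
`p` that is abelian of exponent dividing `p`. Then `N` is normal in `T`, and for any
`σ ∈ T \ N`, the commutator subgroup `[T,T]` equals `[⟨σ⟩, N]`. -/
theorem stmt0 (p : ℕ) (hp : p.Prime) (T : Type*) [Group T]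
    (N : Subgroup T) (hmax : IsCoatom N) (hidx : N.index = p)
    (hab : ∀ x ∈ N, ∀ y ∈ N, Commute x y)
    (hexp : ∀ x ∈ N, x ^ p = 1)
    (σ : T) (hσ : σ ∉ N) :
    N.Normal ∧ commutator T = ⁅Subgroup.zpowers σ, N⁆ := by
  haveI := Fact.mk hp
  have hp0 : p ≠ 0 := hp.ne_zero
  -- Part 1 : normality
  have key : ∀ g : T, ∀ n ∈ N, g * n * g⁻¹ ∈ N := by
    by_contra hcon
    push_neg at hcon
    obtain ⟨g, n, hn, hgn⟩ := hcon
    set f := (MulAut.conj g).toMonoidHom with hfdef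
    have hfinj : Function.Injective f := (MulAut.conj g).injective
    have hfsurj : Function.Surjective f := (MulAut.conj g).surjective
    set M := N.map f with hMdef
    have hMidx : M.index = p := by
      rw [hMdef, Subgroup.index_map_eq N hfsurj
        (by rw [(MonoidHom.ker_eq_bot_iff f).mpr hfinj]; exact bot_le)]
      exact hidx
    have hgnM : g * n * g⁻¹ ∈ M := ⟨n, hn, rfl⟩
    have hMab : ∀ x ∈ M, ∀ y ∈ M, Commute x y := by
      rintro x ⟨a, ha, rfl⟩ y ⟨b, hb, rfl⟩
      exact (hab a ha b hb).map f
    have hMnleN : ¬M ≤ N := fun h => hgn (h hgnM)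
    have hNnleM : ¬N ≤ M := by
      intro h
      have h1 : N.relIndex M * M.index = N.index := relIndex_mul_index h
      rw [hMidx, hidx] at h1
      have h2 : N.relIndex M = 1 :=
        Nat.eq_of_mul_eq_mul_right (Nat.pos_of_ne_zero hp0) (h1.trans (one_mul p).symm)
      exact hMnleN (relIndex_eq_one.mp h2)
    have htop : N ⊔ M = ⊤ :=
      hmax.2 _ (lt_of_le_of_ne le_sup_left fun h => hMnleN (le_sup_right.trans_eq h.symm))
    haveI hMN : (M.subgroupOf N).Normal := by
      constructor
      intro x hx y
      have hc : y * x * y⁻¹ = x := by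
        apply Subtype.ext
        push_cast
        rw [(hab (y : T) y.2 (x : T) x.2).eq, mul_inv_cancel_right]
      rw [hc]; exact hx
    have hr0 : M.relIndex N ≠ 0 := fun h =>
      hp0 (by rw [← hMidx]; exact index_eq_zero_of_relIndex_eq_zero h)
    have hrle : M.relIndex N ≤ p := by
      have h0 : M.relIndex ⊤ ≠ 0 := by rw [relIndex_top_right, hMidx]; exact hp0
      have h1 := relIndex_le_of_le_right (le_top : N ≤ ⊤) h0
      rwa [relIndex_top_right, hMidx] at h1
    have hr1 : M.relIndex N ≠ 1 := fun h => hNnleM (relIndex_eq_one.mp h)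
    have hrcard : M.relIndex N = (M.subgroupOf N).index := rfl
    haveI : Finite (↥N ⧸ M.subgroupOf N) :=
      Nat.finite_of_card_ne_zero (by rw [← index_eq_card, ← hrcard]; exact hr0)
    have hpg : IsPGroup p (↥N ⧸ M.subgroupOf N) := by
      intro q
      refine ⟨1, ?_⟩
      obtain ⟨x, rfl⟩ := QuotientGroup.mk_surjective q
      have hx : x ^ p = 1 := Subtype.ext (by push_cast; exact hexp _ x.2)
      rw [pow_one, ← QuotientGroup.mk_pow, hx, QuotientGroup.mk_one]
    obtain ⟨k, hk⟩ := hpg.exists_card_eq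
    rw [← index_eq_card, ← hrcard] at hk
    have hrp : M.relIndex N = p := by
      rcases k with _ | _ | k
      · rw [pow_zero] at hk; exact absurd hk hr1
      · rw [hk, pow_one]
      · exfalso
        rw [hk] at hrle
        have h2 : p ^ 2 ≤ p ^ (k + 1 + 1) := Nat.pow_le_pow_right hp.pos (by omega)
        have h3 : p < p ^ 2 := by
          rw [sq]
          calc p < 2 * p := by have := hp.pos; omega
          _ ≤ p * p := Nat.mul_le_mul_right p hp.two_le
        omega
    have hZidx : (M ⊓ N).index = p * p := by
      have h1 := relIndex_mul_index (inf_le_right : M ⊓ N ≤ N)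
      rw [inf_relIndex_right, hrp, hidx] at h1
      exact h1.symm
    have hclosure : closure ((N : Set T) ∪ (M : Set T)) = ⊤ := by
      rw [Subgroup.closure_union, closure_eq, closure_eq, htop]
    have hZc : ∀ z ∈ M ⊓ N, ∀ t : T, Commute z t := by
      intro z hz t
      have ht : t ∈ closure ((N : Set T) ∪ (M : Set T)) := by rw [hclosure]; exact mem_top t
      induction ht using closure_induction with
      | mem x hx =>
        rcases hx with hx | hx
        · exact hab z hz.2 x hx
        · exact hMab z hz.1 x hx
      | one => exact Commute.one_right z
      | mul x y hx hy ihx ihy => exact ihx.mul_right ihy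
      | inv x hx ihx => exact ihx.inv_right
    haveI hZn : (M ⊓ N).Normal := by
      constructor
      intro z hz t
      have h1 : t * z * t⁻¹ = z := by rw [← (hZc z hz t).eq, mul_inv_cancel_right]
      rw [h1]; exact hz
    have hcard2 : Nat.card (T ⧸ (M ⊓ N)) = p ^ 2 := by rw [← index_eq_card, hZidx, sq]
    have hcomm := IsPGroup.commutative_of_card_eq_prime_sq hcard2
    have hmem : ⁅g, n⁆ ∈ M ⊓ N := by
      have h1 : ((QuotientGroup.mk' (M ⊓ N)) ⁅g, n⁆) = 1 := by
        rw [map_commutatorElement]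
        exact commutatorElement_eq_one_iff_mul_comm.mpr (hcomm _ _)
      exact (QuotientGroup.eq_one_iff _).mp h1
    refine hgn ?_
    have h2 : ⁅g, n⁆ * n ∈ N := N.mul_mem hmem.2 hn
    rwa [commutatorElement_def, inv_mul_cancel_right] at h2
  haveI hNormal : N.Normal := ⟨fun n hn g => key g n hn⟩
  refine ⟨hNormal, ?_⟩
  -- Part 2
  set C := ⁅Subgroup.zpowers σ, N⁆ with hCdef
  have hCleN : C ≤ N := commutator_le.mpr fun a _ b hb => by
    rw [commutatorElement_def]
    exact N.mul_mem (hNormal.conj_mem b hb a) (N.inv_mem hb)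
  have htop2 : closure ((N : Set T) ∪ {σ}) = ⊤ := by
    rw [Subgroup.closure_union, closure_eq, ← zpowers_eq_closure]
    exact hmax.2 _ (lt_of_le_of_ne le_sup_left fun h =>
      hσ (by rw [h]; exact Subgroup.mem_sup_right (mem_zpowers σ)))
  haveI hCn : C.Normal := by
    have hsub : closure ((N : Set T) ∪ {σ}) ≤ normalizer (C : Set T) := by
      rw [closure_le]
      rintro x (hx | hx)
      · rw [SetLike.mem_coe, mem_normalizer_iff]
        intro h
        constructor
        · intro hh
          have hhN : h ∈ N := hCleN hh
          have h1 : x * h * x⁻¹ = h := by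
            rw [(hab x hx h hhN).eq, mul_inv_cancel_right]
          rwa [h1]
        · intro hh
          have hhN : x * h * x⁻¹ ∈ N := hCleN hh
          have hhN' : h ∈ N := by
            have h3 := N.mul_mem (N.mul_mem (N.inv_mem hx) hhN) hx
            simpa [mul_assoc] using h3
          have h1 : x * h * x⁻¹ = h := by
            rw [(hab x hx h hhN').eq, mul_inv_cancel_right]
          rwa [h1] at hh
      · rw [Set.mem_singleton_iff] at hx
        subst hx
        rw [SetLike.mem_coe, mem_normalizer_iff]
        intro h
        have hmap : C.map (MulAut.conj x).toMonoidHom = C := by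
          rw [hCdef, map_commutator]
          congr 1
          · rw [MonoidHom.map_zpowers]
            congr 1
            simp [MulAut.conj_apply]
          · ext y
            constructor
            · rintro ⟨a, ha, rfl⟩
              exact hNormal.conj_mem a ha x
            · intro hy
              refine ⟨x⁻¹ * y * x, by simpa using hNormal.conj_mem y hy x⁻¹, ?_⟩
              simp [MulAut.conj_apply]
              group
        constructor
        · intro hh
          have h1 : (MulAut.conj x).toMonoidHom h ∈ C.map (MulAut.conj x).toMonoidHom :=
            mem_map_of_mem _ hh
          rw [hmap] at h1
          simpa [MulAut.conj_apply] using h1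
        · intro hh
          rw [← hmap] at hh
          obtain ⟨c, hc, hc2⟩ := hh
          have h1 : c = h := (MulAut.conj x).injective (by simpa [MulAut.conj_apply] using hc2)
          exact h1 ▸ hc
    rw [htop2] at hsub
    exact normalizer_eq_top_iff.mp (le_antisymm le_top hsub)
  have hiff : ∀ u v : T, Commute ((u : T ⧸ C)) (v : T ⧸ C) ↔ ⁅u, v⁆ ∈ C := by
    intro u v
    rw [← commutatorElement_eq_one_iff_commute,
      show ⁅(u : T ⧸ C), (v : T ⧸ C)⁆ = ((QuotientGroup.mk' C) ⁅u, v⁆) from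
        (map_commutatorElement (QuotientGroup.mk' C) u v).symm]
    exact QuotientGroup.eq_one_iff _
  have hCcomm : ∀ a b : T, ⁅a, b⁆ ∈ C := by
    have main : ∀ (x y : T), x ∈ closure ((N : Set T) ∪ {σ}) →
        y ∈ closure ((N : Set T) ∪ {σ}) → Commute ((x : T ⧸ C)) (y : T ⧸ C) := by
      intro x y hx hy
      refine closure_induction₂
        (k := (N : Set T) ∪ {σ})
        (p := fun (u v : T) _ _ => Commute ((u : T ⧸ C)) ((v : T ⧸ C)))
        (fun u v hu hv => ?_) (fun u hu => ?_) (fun u hu => ?_)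
        (fun u v w hu hv hw h1 h2 => ?_) (fun u v w hu hv hw h1 h2 => ?_)
        (fun u v hu hv h1 => ?_) (fun u v hu hv h1 => ?_) hx hy
      · show Commute ((u : T ⧸ C)) (v : T ⧸ C)
        rw [hiff]
        rcases hu with hu | hu <;> rcases hv with hv | hv
        · have h5 : ⁅u, v⁆ = (1 : T) := commutatorElement_eq_one_iff_commute.mpr (hab u hu v hv)
          rw [h5]; exact C.one_mem
        · rw [Set.mem_singleton_iff] at hv
          rw [hv, ← commutatorElement_inv]
          exact C.inv_mem (commutator_mem_commutator (mem_zpowers σ) hu)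
        · rw [Set.mem_singleton_iff] at hu
          rw [hu]
          exact commutator_mem_commutator (mem_zpowers σ) hv
        · rw [Set.mem_singleton_iff] at hu hv
          rw [hu, hv]
          have h5 : ⁅σ, σ⁆ = (1 : T) := commutatorElement_eq_one_iff_commute.mpr (Commute.refl σ)
          rw [h5]; exact C.one_mem
      · show Commute (((1:T) : T ⧸ C)) (u : T ⧸ C)
        rw [QuotientGroup.mk_one]; exact Commute.one_left _
      · show Commute ((u : T ⧸ C)) ((1:T) : T ⧸ C)
        rw [QuotientGroup.mk_one]; exact Commute.one_right _
      · show Commute (((u*v : T) : T ⧸ C)) (w : T ⧸ C)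
        rw [QuotientGroup.mk_mul]; exact Commute.mul_left h1 h2
      · show Commute ((w : T ⧸ C)) ((u*v : T) : T ⧸ C)
        rw [QuotientGroup.mk_mul]; exact Commute.mul_right h1 h2
      · show Commute (((u⁻¹ : T) : T ⧸ C)) (v : T ⧸ C)
        rw [QuotientGroup.mk_inv]; exact Commute.inv_left h1
      · show Commute ((u : T ⧸ C)) ((v⁻¹ : T) : T ⧸ C)
        rw [QuotientGroup.mk_inv]; exact Commute.inv_right h1
    intro a b
    rw [← hiff]
    exact main a b (by rw [htop2]; exact mem_top a) (by rw [htop2]; exact mem_top b)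
  refine le_antisymm ?_ ?_
  · rw [_root_.commutator_def]
    exact commutator_le.mpr fun a _ b _ => hCcomm a b
  · rw [_root_.commutator_def]
    exact commutator_mono le_top le_top
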